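/- Let X be a real symmetric n×n matrix all of whose entries lie in {0,1}, with X(i,i) = 1 for every index i, and suppose X is positive semidefinite. Then there exists a positive integer K and a binary n×K matrix Y such that every row of Y has exactly one nonzero entry and X = Y Yᵀ. -/

import Mathlib

open Matrix

/-- A binary symmetric PSD matrix with unit diagonal is the Gram matrix
of a cluster-indicator matrix: `X = Y * Yᵀ` with `Y` binary and every row
of `Y` having exactly one nonzero entry. -/
theorem binary_psd_is_gram_of_indicator
    (n : ℕ) (X : Matrix (Fin n) (Fin n) ℝ)
    (hbin : ∀ i j, X i j = 0 ∨ X i j = 1)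
    (hdiag : ∀ i, X i i = 1)
    (hpsd : X.PosSemidef) :
    ∃ (K : ℕ), 0 < K ∧ ∃ Y : Matrix (Fin n) (Fin K) ℝ,
      (∀ i k, Y i k = 0 ∨ Y i k = 1) ∧
      (∀ i, ∃! k, Y i k = 1) ∧
      X = Y * Yᵀ := by
  classical
  have hsymm : ∀ a b, X a b = X b a := by
    intro a b
    have h := congrFun (congrFun hpsd.1 a) b
    simpa [Matrix.conjTranspose_apply] using h.symm
  have htrans : ∀ i j k, X i j = 1 → X j k = 1 → X i k = 1 := by
    intro i j k hij hjk
    have hji : X j i = 1 := (hsymm j i).trans hij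
    have hkj : X k j = 1 := (hsymm k j).trans hjk
    have hki : X k i = X i k := hsymm k i
    have h0 := hpsd.dotProduct_mulVec_nonneg (Pi.single i 1 + Pi.single k 1 - Pi.single j 1)
    simp only [Matrix.mulVec_add, Matrix.mulVec_sub, Matrix.mulVec_single,
      dotProduct_add, dotProduct_sub, add_dotProduct, sub_dotProduct,
      single_dotProduct, star_trivial, Pi.add_apply, Pi.sub_apply,
      mul_one, one_mul, MulOpposite.op_one, one_smul, Matrix.col_apply] at h0
    simp only [hdiag, hij, hjk, hji, hkj, hki] at h0
    rcases hbin i k with h | h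
    · rw [h] at h0; linarith
    · exact h
  -- equivalence relation
  let s : Setoid (Fin n) :=
    ⟨fun a b => X a b = 1,
     ⟨fun a => hdiag a, fun {a b} h => (hsymm b a).trans h,
      fun {a b c} h1 h2 => htrans a b c h1 h2⟩⟩
  letI : DecidableEq (Quotient s) := Classical.decEq _
  let m : ℕ := Fintype.card (Quotient s)
  let e : Quotient s ≃ Fin m := Fintype.equivFin (Quotient s)
  refine ⟨m + 1, Nat.succ_pos m, ?_⟩
  let cls : Fin n → Fin (m + 1) := fun i => (e (Quotient.mk s i)).castSucc
  refine ⟨fun i k => if k = cls i then (1 : ℝ) else 0, ?_, ?_, ?_⟩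
  · intro i k
    by_cases h : k = cls i <;> simp [h]
  · intro i
    refine ⟨cls i, by simp, ?_⟩
    intro k hk
    by_contra h
    simp [h] at hk
  · ext i j
    have hsum : (∑ k : Fin (m + 1),
        (if k = cls i then (1 : ℝ) else 0) * (if k = cls j then (1 : ℝ) else 0))
        = if cls i = cls j then 1 else 0 := by
      rw [Finset.sum_eq_single (cls i)]
      · by_cases h : cls i = cls j <;> simp [h]
      · intro b _ hb
        simp [hb]
      · simp
    erw [Matrix.mul_apply]
    change X i j = ∑ k, (if k = cls i then (1:ℝ) else 0) * (if k = cls j then (1:ℝ) else 0)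
    rw [hsum]
    have hcls : cls i = cls j ↔ X i j = 1 := by
      constructor
      · intro h
        have : Quotient.mk s i = Quotient.mk s j := by
          apply e.injective
          exact Fin.castSucc_injective _ h
        exact Quotient.exact this
      · intro h
        have : Quotient.mk s i = Quotient.mk s j := Quotient.sound h
        simp [cls, this]
    by_cases h : X i j = 1
    · simp [h, hcls.mpr h]
    · rcases hbin i j with h0 | h1
      · rw [h0]
        rw [if_neg (fun hc => h (hcls.mp hc))]
      · exact absurd h1 h
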